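/- Let Π be an LP^MLN program over a finite set At of atoms with SSM(Π) ≠ ∅. Then for every interpretation X the limit defining P_Π(X) exists, 0 ≤ P_Π(X) ≤ 1, and Σ_{X ∈ SSM(Π)} P_Π(X) = 1. -/
import Mathlib


open Filter

attribute [local instance] Classical.propDecidable

/-- Propositional formulas over atoms `At`, built from atoms and `⊥`
    using `∧`, `∨`, `→`. -/
inductive Formula (At : Type) where
  | bot  : Formula At
  | atom : At → Formula At
  | and  : Formula At → Formula At → Formula At
  | or   : Formula At → Formula At → Formula At
  | imp  : Formula At → Formula At → Formula At

namespace Formula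

variable {At : Type}

/-- `¬F` abbreviates `F → ⊥`. -/
def neg (F : Formula At) : Formula At := imp F bot

/-- Classical satisfaction of a formula by an interpretation `X ⊆ At`. -/
def sat (X : Finset At) : Formula At → Prop
  | bot => False
  | atom a => a ∈ X
  | and F G => sat X F ∧ sat X G
  | or F G => sat X F ∨ sat X G
  | imp F G => sat X F → sat X G

/-- The reduct `F^X`: every maximal subformula not satisfied by `X` is
    replaced by `⊥`. -/
noncomputable def reduct (X : Finset At) : Formula At → Formula At
  | bot => bot
  | atom a => if sat X (atom a) then atom a else bot
  | and F G => if sat X (and F G) then and (reduct X F) (reduct X G) else bot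
  | or F G => if sat X (or F G) then or (reduct X F) (reduct X G) else bot
  | imp F G => if sat X (imp F G) then imp (reduct X F) (reduct X G) else bot

end Formula

variable {At : Type}

/-- `X` satisfies every formula in `Γ`. -/
def SatAll (X : Finset At) (Γ : Set (Formula At)) : Prop := ∀ F ∈ Γ, F.sat X

/-- `X` is a stable model of `Γ` (Ferraris semantics): `X` satisfies `Γ` and no
    proper subset of `X` satisfies the reduct `Γ^X`. -/
def IsStable (X : Finset At) (Γ : Set (Formula At)) : Prop :=
  SatAll X Γ ∧ ∀ Y : Finset At, Y ⊂ X → ¬ SatAll Y (Formula.reduct X '' Γ)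

/-- Weak constraint `:~ F [w, l]`. -/
structure WeakConstraint (At : Type) where
  formula : Formula At
  weight : ℝ
  level : ℕ

/-- `Cost_Ω(X, l)`: sum of the weights `w` over all `:~ F [w, l]` in `Ω` at level `l`
    whose formula is satisfied by `X`. -/
noncomputable def Cost (Ω : Finset (WeakConstraint At)) (X : Finset At) (l : ℕ) : ℝ :=
  ∑ c ∈ Ω.filter (fun c => c.level = l ∧ c.formula.sat X), c.weight

/-- `X` is an optimal stable model of `Γ ∪ Ω`. -/
def OptStable (Γ : Set (Formula At)) (Ω : Finset (WeakConstraint At)) (X : Finset At) : Prop :=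
  IsStable X Γ ∧
    ¬ ∃ Y : Finset At, IsStable Y Γ ∧ ∃ l : ℕ,
        Cost Ω Y l < Cost Ω X l ∧ ∀ l' : ℕ, l < l' → Cost Ω Y l' = Cost Ω X l'

/-- A weight is either the symbolic infinite weight `α` or a real number. -/
inductive Weight where
  | alpha : Weight
  | soft : ℝ → Weight

/-- The real value of a weight when the real number `a` is substituted for `α`. -/
def Weight.val (a : ℝ) : Weight → ℝ
  | .alpha => a
  | .soft w => w

/-- A weighted formula `w : F`. -/
structure WFormula (At : Type) where
  weight : Weight
  formula : Formula At

/-- A hard formula `α : F`. -/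
def WFormula.isHard (p : WFormula At) : Prop := p.weight = Weight.alpha

/-- A soft formula `w : F` with `w` a real number. -/
def WFormula.isSoft (p : WFormula At) : Prop := ∃ w : ℝ, p.weight = Weight.soft w

/-- `hard(Π)`. -/
noncomputable def hardPart (P : Finset (WFormula At)) : Finset (WFormula At) :=
  P.filter (fun p => p.isHard)

/-- `soft(Π)`. -/
noncomputable def softPart (P : Finset (WFormula At)) : Finset (WFormula At) :=
  P.filter (fun p => p.isSoft)

/-- `Π_X`: the weighted formulas of `Π` whose formula is satisfied by `X`. -/
noncomputable def satPart (P : Finset (WFormula At)) (X : Finset At) : Finset (WFormula At) :=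
  P.filter (fun p => p.formula.sat X)

/-- `SSM(Π)`: the soft stable models of the LP^MLN program `Π`. -/
def SSM (P : Finset (WFormula At)) : Set (Finset At) :=
  { X | IsStable X (WFormula.formula '' (↑(satPart P X) : Set (WFormula At))) }

/-- `W_Π(X, a)`. -/
noncomputable def Wgt (P : Finset (WFormula At)) (X : Finset At) (a : ℝ) : ℝ :=
  if X ∈ SSM P then Real.exp (∑ p ∈ satPart P X, p.weight.val a) else 0

/-- The quotient whose limit as `a → ∞` defines `P_Π(X)`. -/
noncomputable def ratio [Fintype At] (P : Finset (WFormula At)) (X : Finset At) (a : ℝ) : ℝ :=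
  Wgt P X a / ∑ Y ∈ Finset.univ.filter (fun Y => Y ∈ SSM P), Wgt P Y a

/-- `SSM'(Π)`: soft stable models satisfying all hard formulas. -/
def SSM' (P : Finset (WFormula At)) : Set (Finset At) :=
  { X | X ∈ SSM P ∧ ∀ p ∈ P, p.isHard → p.formula.sat X }

/-- `W'_Π(X)` (alternative semantics). -/
noncomputable def Wgt' (P : Finset (WFormula At)) (X : Finset At) : ℝ :=
  if X ∈ SSM' P then
    Real.exp (∑ p ∈ (softPart P).filter (fun p => p.formula.sat X), p.weight.val 0)
  else 0

/-- `P'_Π(X)` (alternative semantics). -/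
noncomputable def Pr' [Fintype At] (P : Finset (WFormula At)) (X : Finset At) : ℝ :=
  Wgt' P X / ∑ Y : Finset At, Wgt' P Y

/-- A plingo program: hard formulas, soft integrity constraints (a real weight
    together with the constraint formula), and weak constraints. -/
structure PlingoProgram (At : Type) where
  hard : Finset (Formula At)
  soft : Finset (ℝ × Formula At)
  weak : Finset (WeakConstraint At)

/-- `OSM(Π)`: optimal stable models of `hard(Π) ∪ weak(Π)`. -/
def OSM (P : PlingoProgram At) : Set (Finset At) :=
  { X | OptStable (↑P.hard) P.weak X }

/-- `W''_Π(X)`. -/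
noncomputable def Wgt'' (P : PlingoProgram At) (X : Finset At) : ℝ :=
  if X ∈ OSM P then Real.exp (∑ p ∈ P.soft.filter (fun p => p.2.sat X), p.1) else 0

/-- `P''_Π(X)`. -/
noncomputable def Pr'' [Fintype At] (P : PlingoProgram At) (X : Finset At) : ℝ :=
  Wgt'' P X / ∑ Y ∈ Finset.univ.filter (fun Y => Y ∈ OSM P), Wgt'' P Y


section Aux
variable {At : Type}

/-- Number of hard formulas in `Π_X`. -/
noncomputable def nH (P : Finset (WFormula At)) (X : Finset At) : ℕ :=
  ((satPart P X).filter (fun p => p.weight = Weight.alpha)).card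

/-- Sum of soft weights in `Π_X`. -/
noncomputable def sS (P : Finset (WFormula At)) (X : Finset At) : ℝ :=
  ∑ p ∈ (satPart P X).filter (fun p => ¬ p.weight = Weight.alpha), p.weight.val 0

lemma sum_val_eq (P : Finset (WFormula At)) (X : Finset At) (a : ℝ) :
    ∑ p ∈ satPart P X, p.weight.val a = (nH P X : ℝ) * a + sS P X := by
  classical
  rw [← Finset.sum_filter_add_sum_filter_not (satPart P X)
    (fun p => p.weight = Weight.alpha)]
  congr 1
  · rw [Finset.sum_congr rfl (g := fun _ => a)
      (fun p hp => by
        have := (Finset.mem_filter.mp hp).2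
        simp [this, Weight.val])]
    simp [nH, mul_comm]
  · refine Finset.sum_congr rfl (fun p hp => ?_)
    have hne := (Finset.mem_filter.mp hp).2
    cases hw : p.weight with
    | alpha => exact absurd hw hne
    | soft w => simp [Weight.val]

end Aux

/-- if `SSM(Π) ≠ ∅`, then for every interpretation `X` the limit
    defining `P_Π(X)` exists, lies in `[0, 1]`, and the probabilities of the soft
    stable models sum to `1`. -/
theorem lpmln_prob_is_probability {At : Type} [Fintype At] (P : Finset (WFormula At))
    (h : (SSM P).Nonempty) :
    ∃ Pr : Finset At → ℝ,
      (∀ X : Finset At, Tendsto (fun a : ℝ => ratio P X a) atTop (nhds (Pr X))) ∧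
      (∀ X : Finset At, 0 ≤ Pr X ∧ Pr X ≤ 1) ∧
      ∑ X ∈ Finset.univ.filter (fun X => X ∈ SSM P), Pr X = 1 := by
  classical
  set S : Finset (Finset At) := Finset.univ.filter (fun Y => Y ∈ SSM P) with hSdef
  obtain ⟨X0, hX0⟩ := h
  have hS : S.Nonempty := ⟨X0, by simp [hSdef, hX0]⟩
  set N : ℕ := S.sup' hS (nH P) with hNdef
  set L : Finset At → ℝ := fun Y =>
    if Y ∈ SSM P ∧ nH P Y = N then Real.exp (sS P Y) else 0 with hLdef
  set T : ℝ := ∑ Y ∈ S, L Y with hTdef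
  have hLnonneg : ∀ Y, 0 ≤ L Y := by
    intro Y; rw [hLdef]; dsimp only
    split
    · exact (Real.exp_pos _).le
    · exact le_rfl
  have hT : 0 < T := by
    obtain ⟨Y0, hY0S, hY0⟩ := Finset.exists_mem_eq_sup' hS (nH P)
    have hY0ssm : Y0 ∈ SSM P := (Finset.mem_filter.mp hY0S).2
    refine Finset.sum_pos' (fun Y _ => hLnonneg Y) ⟨Y0, hY0S, ?_⟩
    rw [hLdef]; dsimp only
    rw [if_pos ⟨hY0ssm, hY0.symm⟩]
    exact Real.exp_pos _
  -- the rescaled weight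
  set g : Finset At → ℝ → ℝ := fun Y a => Wgt P Y a * Real.exp (-(N : ℝ) * a)
    with hgdef
  have hg_tendsto : ∀ Y, Tendsto (g Y) atTop (nhds (L Y)) := by
    intro Y
    by_cases hY : Y ∈ SSM P
    · have hgy : ∀ a, g Y a = Real.exp (((nH P Y : ℝ) - N) * a + sS P Y) := by
        intro a
        rw [hgdef]; dsimp only
        rw [Wgt, if_pos hY, sum_val_eq, ← Real.exp_add]
        ring_nf
      by_cases hn : nH P Y = N
      · have : ∀ a, g Y a = Real.exp (sS P Y) := by
          intro a; rw [hgy a, hn]; ring_nf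
        have hL1 : L Y = Real.exp (sS P Y) := by
          rw [hLdef]; dsimp only; rw [if_pos ⟨hY, hn⟩]
        rw [hL1]
        exact tendsto_const_nhds.congr (fun a => (this a).symm)
      · have hlt : nH P Y < N := lt_of_le_of_ne
          (Finset.le_sup' (nH P) (by simp [hSdef, hY])) hn
        have hc : ((nH P Y : ℝ) - N) < 0 := by
          have : (nH P Y : ℝ) < N := by exact_mod_cast hlt
          linarith
        have h1 : Tendsto (fun a : ℝ => ((nH P Y : ℝ) - N) * a) atTop atBot :=
          (tendsto_const_mul_atBot_of_neg hc).2 tendsto_id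
        have h2 : Tendsto (fun a : ℝ => ((nH P Y : ℝ) - N) * a + sS P Y)
            atTop atBot := tendsto_atBot_add_const_right _ _ h1
        have h3 := Real.tendsto_exp_atBot.comp h2
        have hL0 : L Y = 0 := by
          rw [hLdef]; dsimp only; rw [if_neg (by tauto)]
        rw [hL0]
        refine h3.congr (fun a => ?_)
        exact (hgy a).symm
    · have : ∀ a, g Y a = 0 := by
        intro a; rw [hgdef]; dsimp only; rw [Wgt, if_neg hY, zero_mul]
      have hL0 : L Y = 0 := by
        rw [hLdef]; dsimp only; rw [if_neg (by tauto)]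
      rw [hL0]; exact tendsto_const_nhds.congr (fun a => (this a).symm)
  have hsum_tendsto : Tendsto (fun a => ∑ Y ∈ S, g Y a) atTop (nhds T) := by
    rw [hTdef]
    exact tendsto_finset_sum S (fun Y _ => hg_tendsto Y)
  have hratio_eq : ∀ X a, ratio P X a = g X a / ∑ Y ∈ S, g Y a := by
    intro X a
    rw [ratio, hgdef]; dsimp only
    rw [← Finset.sum_mul, mul_div_mul_right _ _ (Real.exp_ne_zero _)]
  refine ⟨fun X => L X / T, ?_, ?_, ?_⟩
  · intro X
    have := (hg_tendsto X).div hsum_tendsto hT.ne'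
    exact this.congr (fun a => (hratio_eq X a).symm)
  · intro X
    constructor
    · exact div_nonneg (hLnonneg X) hT.le
    · rw [div_le_one hT]
      by_cases hX : X ∈ SSM P
      · rw [hTdef]
        exact Finset.single_le_sum (fun Y _ => hLnonneg Y) (by simp [hSdef, hX])
      · have : L X = 0 := by
          rw [hLdef]; dsimp only; rw [if_neg (by tauto)]
        rw [this]; exact hT.le
  · rw [← Finset.sum_div, ← hTdef, div_self hT.ne']
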